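/- Let w ∈ B_n and let σ(w) = (w₁, w₂), where w₁ ∈ B_{⌈n/2⌉} is the signed permutation obtained by restricting w to odd-indexed columns (and their corresponding rows) and w₂ ∈ B_{⌊n/2⌋} is obtained from the even-indexed columns. Then L(w) = neg(w₁) + l(w) − l(w₁) − l(w₂), where l denotes the Coxeter length of type B and neg(v) = #{i : v(i) < 0}. -/

import Mathlib

open Finset Polynomial

def IsSigned (n : ℕ) (w : ℤ → ℤ) : Prop :=
  (∀ j : ℤ, w (-j) = -w j) ∧
    Set.BijOn w (Set.Icc (-(n : ℤ)) n) (Set.Icc (-(n : ℤ)) n)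

noncomputable def Lset (n : ℕ) (w : ℤ → ℤ) : Finset (ℤ × ℤ) :=
  (Finset.Icc (-(n : ℤ)) n ×ˢ Finset.Icc (-(n : ℤ)) n).filter
    fun p => p.1 < p.2 ∧ w p.2 < w p.1 ∧ p.1 % 2 ≠ p.2 % 2

noncomputable def Lstat (n : ℕ) (w : ℤ → ℤ) : ℕ := (Lset n w).card / 2

noncomputable def invStat (n : ℕ) (w : ℤ → ℤ) : ℕ :=
  ((Finset.Icc (1 : ℤ) n ×ˢ Finset.Icc (1 : ℤ) n).filter
    fun p => p.1 < p.2 ∧ w p.2 < w p.1).card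

noncomputable def negStat (n : ℕ) (w : ℤ → ℤ) : ℕ :=
  ((Finset.Icc (1 : ℤ) n).filter fun i => w i < 0).card

noncomputable def nspStat (n : ℕ) (w : ℤ → ℤ) : ℕ :=
  ((Finset.Icc (1 : ℤ) n ×ˢ Finset.Icc (1 : ℤ) n).filter
    fun p => p.1 < p.2 ∧ w p.1 + w p.2 < 0).card

noncomputable def lenStat (n : ℕ) (w : ℤ → ℤ) : ℕ := invStat n w + negStat n w + nspStat n w

noncomputable def Dset (n : ℕ) (w : ℤ → ℤ) : Finset ℤ :=
  (Finset.Ico (0 : ℤ) n).filter fun i => w (i + 1) < w i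

abbrev HypOct (n : ℕ) := Equiv.Perm (Fin n) × (Fin n → Bool)

def HypOct.fn {n : ℕ} (w : HypOct n) : ℤ → ℤ := fun j =>
  if h : 1 ≤ j ∧ j ≤ (n : ℤ) then
    (if w.2 ⟨(j - 1).toNat, by omega⟩ then -1 else 1) *
      (((w.1 ⟨(j - 1).toNat, by omega⟩ : Fin n) : ℤ) + 1)
  else if h' : 1 ≤ -j ∧ -j ≤ (n : ℤ) then
    -((if w.2 ⟨(-j - 1).toNat, by omega⟩ then -1 else 1) *
      (((w.1 ⟨(-j - 1).toNat, by omega⟩ : Fin n) : ℤ) + 1))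
  else 0

/-- The rank of `|w(2a-1)|` among the absolute values in the odd-indexed columns. -/
noncomputable def oddRank (n : ℕ) (w : ℤ → ℤ) (a : ℤ) : ℕ :=
  ((Finset.Icc (1 : ℤ) (((n + 1) / 2 : ℕ) : ℤ)).filter
    fun b => |w (2 * b - 1)| ≤ |w (2 * a - 1)|).card

/-- The rank of `|w(2a)|` among the absolute values in the even-indexed columns. -/
noncomputable def evenRank (n : ℕ) (w : ℤ → ℤ) (a : ℤ) : ℕ :=
  ((Finset.Icc (1 : ℤ) ((n / 2 : ℕ) : ℤ)).filter
    fun b => |w (2 * b)| ≤ |w (2 * a)|).card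

/-- The signed permutation `w₁` of size `⌈n/2⌉` obtained from the odd-indexed
columns of `w` (and the corresponding rows). -/
noncomputable def oddPart (n : ℕ) (w : ℤ → ℤ) : ℤ → ℤ := fun a =>
  (if w (2 * a - 1) < 0 then -1 else 1) * (oddRank n w a : ℤ)

/-- The signed permutation `w₂` of size `⌊n/2⌋` obtained from the even-indexed
columns of `w` (and the corresponding rows). -/
noncomputable def evenPart (n : ℕ) (w : ℤ → ℤ) : ℤ → ℤ := fun a =>
  (if w (2 * a) < 0 then -1 else 1) * (evenRank n w a : ℤ)


open Finset

def invC (w : ℤ → ℤ) (S : Finset ℤ) : ℕ :=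
  ((S ×ˢ S).filter fun p => p.1 < p.2 ∧ w p.2 < w p.1).card
def nspC (w : ℤ → ℤ) (P : Finset ℤ) : ℕ :=
  ((P ×ˢ P).filter fun p => p.1 < p.2 ∧ w p.1 + w p.2 < 0).card
def negC (w : ℤ → ℤ) (P : Finset ℤ) : ℕ := (P.filter fun i => w i < 0).card

lemma invC_sym (w : ℤ → ℤ) (hodd : ∀ j : ℤ, w (-j) = -w j) (P W : Finset ℤ)
    (hP : ∀ i ∈ P, 0 < i) (hW : ∀ i : ℤ, i ∈ W ↔ i ∈ P ∨ -i ∈ P) :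
    invC w W = 2 * invC w P + 2 * nspC w P + negC w P := by
  have hWpos : ∀ i ∈ W, 0 < i → i ∈ P := by
    intro i hi h0
    rcases (hW i).1 hi with h | h
    · exact h
    · exact absurd (hP _ h) (by omega)
  have hWneg : ∀ i ∈ W, i < 0 → -i ∈ P := by
    intro i hi h0
    rcases (hW i).1 hi with h | h
    · exact absurd (hP _ h) (by omega)
    · exact h
  have hW0 : ∀ i ∈ W, i ≠ 0 := by
    intro i hi
    rcases (hW i).1 hi with h | h <;> have := hP _ h <;> omega
  have hPW : ∀ i ∈ P, i ∈ W := fun i hi => (hW i).2 (Or.inl hi)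
  have hPWn : ∀ i ∈ P, -i ∈ W := fun i hi => (hW (-i)).2 (Or.inr (by rwa [neg_neg]))
  unfold invC nspC negC
  set T := (W ×ˢ W).filter fun p : ℤ × ℤ => p.1 < p.2 ∧ w p.2 < w p.1 with hTdef
  have key1 : T.filter (fun p => 0 < p.1)
      = (P ×ˢ P).filter fun p : ℤ × ℤ => p.1 < p.2 ∧ w p.2 < w p.1 := by
    ext p
    simp only [hTdef, Finset.mem_filter, Finset.mem_product]
    constructor
    · rintro ⟨⟨⟨h1, h2⟩, h3, h4⟩, h5⟩
      exact ⟨⟨hWpos _ h1 h5, hWpos _ h2 (by omega)⟩, h3, h4⟩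
    · rintro ⟨⟨h1, h2⟩, h3, h4⟩
      exact ⟨⟨⟨hPW _ h1, hPW _ h2⟩, h3, h4⟩, hP _ h1⟩
  have key2 : ((T.filter fun p => ¬ 0 < p.1).filter fun p => p.2 < 0).card
      = ((P ×ˢ P).filter fun p : ℤ × ℤ => p.1 < p.2 ∧ w p.2 < w p.1).card := by
    apply Finset.card_nbij' (fun p => (-p.2, -p.1)) (fun q => (-q.2, -q.1))
    · rintro ⟨i, j⟩ hp
      simp only [Finset.mem_coe, hTdef, Finset.mem_filter, Finset.mem_product] at hp ⊢
      obtain ⟨⟨⟨⟨h1, h2⟩, h3, h4⟩, h5⟩, h6⟩ := hp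
      have e1 := hodd i; have e2 := hodd j
      exact ⟨⟨hWneg _ h2 h6, hWneg _ h1 (by omega)⟩, by omega, by omega⟩
    · rintro ⟨a, b⟩ hq
      simp only [Finset.mem_coe, hTdef, Finset.mem_filter, Finset.mem_product] at hq ⊢
      obtain ⟨⟨h1, h2⟩, h3, h4⟩ := hq
      have e1 := hodd a; have e2 := hodd b
      have := hP _ h1; have := hP _ h2
      exact ⟨⟨⟨⟨hPWn _ h2, hPWn _ h1⟩, by omega, by omega⟩, by omega⟩, by omega⟩
    · rintro ⟨i, j⟩ _; simp
    · rintro ⟨a, b⟩ _; simp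
  have key3 : (((T.filter fun p => ¬ 0 < p.1).filter fun p => ¬ p.2 < 0).filter
        fun p => p.1 = -p.2).card
      = (P.filter fun i => w i < 0).card := by
    apply Finset.card_nbij' (fun p => p.2) (fun a => (-a, a))
    · rintro ⟨i, j⟩ hp
      simp only [Finset.mem_coe, hTdef, Finset.mem_filter, Finset.mem_product] at hp ⊢
      obtain ⟨⟨⟨⟨⟨h1, h2⟩, h3, h4⟩, h5⟩, h6⟩, h7⟩ := hp
      subst h7
      have e := hodd j
      have hj0 := hW0 _ h2
      exact ⟨hWpos _ h2 (by omega), by omega⟩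
    · intro a ha
      simp only [Finset.mem_coe, Finset.mem_filter] at ha
      obtain ⟨h1, h2⟩ := ha
      have := hP _ h1
      have e := hodd a
      simp only [Finset.mem_coe, hTdef, Finset.mem_filter, Finset.mem_product]
      exact ⟨⟨⟨⟨⟨hPWn _ h1, hPW _ h1⟩, by omega, by omega⟩, by omega⟩, by omega⟩, trivial⟩
    · rintro ⟨i, j⟩ hp
      simp only [Finset.mem_coe, hTdef, Finset.mem_filter, Finset.mem_product] at hp
      obtain ⟨⟨⟨⟨⟨h1, h2⟩, h3, h4⟩, h5⟩, h6⟩, h7⟩ := hp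
      simp [h7]
    · intro a _; rfl
  have key4 : (((T.filter fun p => ¬ 0 < p.1).filter fun p => ¬ p.2 < 0).filter
        fun p => ¬ p.1 = -p.2).card
      = ((P ×ˢ P).filter fun q : ℤ × ℤ => q.1 ≠ q.2 ∧ w q.1 + w q.2 < 0).card := by
    apply Finset.card_nbij' (fun p => (-p.1, p.2)) (fun q => (-q.1, q.2))
    · rintro ⟨i, j⟩ hp
      simp only [Finset.mem_coe, hTdef, Finset.mem_filter, Finset.mem_product] at hp ⊢
      obtain ⟨⟨⟨⟨⟨h1, h2⟩, h3, h4⟩, h5⟩, h6⟩, h7⟩ := hp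
      have e := hodd i
      have hi0 := hW0 _ h1; have hj0 := hW0 _ h2
      exact ⟨⟨hWneg _ h1 (by omega), hWpos _ h2 (by omega)⟩, by omega, by omega⟩
    · rintro ⟨a, b⟩ hq
      simp only [Finset.mem_coe, Finset.mem_filter, Finset.mem_product] at hq
      obtain ⟨⟨h1, h2⟩, h3, h4⟩ := hq
      have := hP _ h1; have := hP _ h2
      have e := hodd a
      simp only [Finset.mem_coe, hTdef, Finset.mem_filter, Finset.mem_product]
      exact ⟨⟨⟨⟨⟨hPWn _ h1, hPW _ h2⟩, by omega, by omega⟩, by omega⟩, by omega⟩, by omega⟩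
    · rintro ⟨i, j⟩ _; simp
    · rintro ⟨a, b⟩ _; simp
  have keyD : ((P ×ˢ P).filter fun q : ℤ × ℤ => q.1 ≠ q.2 ∧ w q.1 + w q.2 < 0).card
      = 2 * ((P ×ˢ P).filter fun p : ℤ × ℤ => p.1 < p.2 ∧ w p.1 + w p.2 < 0).card := by
    have c := Finset.card_filter_add_card_filter_not
      (s := (P ×ˢ P).filter fun q : ℤ × ℤ => q.1 ≠ q.2 ∧ w q.1 + w q.2 < 0)
      (p := fun q : ℤ × ℤ => q.1 < q.2)
    have e1 : (((P ×ˢ P).filter fun q : ℤ × ℤ => q.1 ≠ q.2 ∧ w q.1 + w q.2 < 0).filter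
          fun q : ℤ × ℤ => q.1 < q.2)
        = (P ×ˢ P).filter fun p : ℤ × ℤ => p.1 < p.2 ∧ w p.1 + w p.2 < 0 := by
      ext ⟨a, b⟩
      simp only [Finset.mem_filter, Finset.mem_product]
      constructor
      · rintro ⟨⟨hm, h, h'⟩, h''⟩; exact ⟨hm, h'', h'⟩
      · rintro ⟨hm, h, h'⟩; exact ⟨⟨hm, by omega, h'⟩, h⟩
    have e2 : (((P ×ˢ P).filter fun q : ℤ × ℤ => q.1 ≠ q.2 ∧ w q.1 + w q.2 < 0).filter
          fun q : ℤ × ℤ => ¬ q.1 < q.2).card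
        = ((P ×ˢ P).filter fun p : ℤ × ℤ => p.1 < p.2 ∧ w p.1 + w p.2 < 0).card := by
      apply Finset.card_nbij' (fun q => (q.2, q.1)) (fun q => (q.2, q.1))
      · rintro ⟨a, b⟩ hq
        simp only [Finset.mem_coe, Finset.mem_filter, Finset.mem_product] at hq ⊢
        obtain ⟨⟨⟨h1, h2⟩, h3, h4⟩, h5⟩ := hq
        exact ⟨⟨h2, h1⟩, by omega, by omega⟩
      · rintro ⟨a, b⟩ hq
        simp only [Finset.mem_coe, Finset.mem_filter, Finset.mem_product] at hq ⊢
        obtain ⟨⟨h1, h2⟩, h3, h4⟩ := hq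
        exact ⟨⟨⟨h2, h1⟩, by omega, by omega⟩, by omega⟩
      · rintro ⟨a, b⟩ _; rfl
      · rintro ⟨a, b⟩ _; rfl
    rw [e1] at c
    omega
  have c1 := Finset.card_filter_add_card_filter_not (s := T)
    (p := fun p : ℤ × ℤ => 0 < p.1)
  have c2 := Finset.card_filter_add_card_filter_not
    (s := T.filter fun p : ℤ × ℤ => ¬ 0 < p.1) (p := fun p : ℤ × ℤ => p.2 < 0)
  have c3 := Finset.card_filter_add_card_filter_not
    (s := (T.filter fun p : ℤ × ℤ => ¬ 0 < p.1).filter fun p : ℤ × ℤ => ¬ p.2 < 0)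
    (p := fun p : ℤ × ℤ => p.1 = -p.2)
  rw [key1] at c1
  omega
lemma invC_sym0 (w : ℤ → ℤ) (hodd : ∀ j : ℤ, w (-j) = -w j) (P W : Finset ℤ)
    (hP : ∀ i ∈ P, 0 < i) (hW : ∀ i : ℤ, i ∈ W ↔ i = 0 ∨ i ∈ P ∨ -i ∈ P) :
    invC w W = 2 * invC w P + 2 * nspC w P + 3 * negC w P := by
  have hw0 : w 0 = 0 := by have := hodd 0; simp at this; omega
  have hW0 : (0 : ℤ) ∈ W := (hW 0).2 (Or.inl rfl)
  have hW' : ∀ i : ℤ, i ∈ W.erase 0 ↔ i ∈ P ∨ -i ∈ P := by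
    intro i
    rw [Finset.mem_erase, hW i]
    constructor
    · rintro ⟨h0, h | h | h⟩
      · exact absurd h h0
      · exact Or.inl h
      · exact Or.inr h
    · rintro (h | h)
      · exact ⟨(hP _ h).ne', Or.inr (Or.inl h)⟩
      · have := hP _ h
        exact ⟨by omega, Or.inr (Or.inr h)⟩
  have hmain := invC_sym w hodd P (W.erase 0) hP hW'
  have hWerase : ∀ i ∈ W.erase 0, i ≠ 0 := fun i hi => (Finset.mem_erase.1 hi).1
  -- split the big count into pairs avoiding 0 and pairs containing 0
  unfold invC at hmain ⊢
  unfold negC at hmain ⊢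
  unfold nspC at hmain ⊢
  set T := (W ×ˢ W).filter fun p : ℤ × ℤ => p.1 < p.2 ∧ w p.2 < w p.1 with hTdef
  have keyA : T.filter (fun p => p.1 ≠ 0 ∧ p.2 ≠ 0)
      = ((W.erase 0) ×ˢ (W.erase 0)).filter fun p : ℤ × ℤ => p.1 < p.2 ∧ w p.2 < w p.1 := by
    ext ⟨i, j⟩
    simp only [hTdef, Finset.mem_filter, Finset.mem_product, Finset.mem_erase]
    tauto
  have keyB : (T.filter fun p => ¬ (p.1 ≠ 0 ∧ p.2 ≠ 0)).card
      = 2 * (P.filter fun i => w i < 0).card := by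
    have c := Finset.card_filter_add_card_filter_not
      (s := T.filter fun p : ℤ × ℤ => ¬ (p.1 ≠ 0 ∧ p.2 ≠ 0)) (p := fun p : ℤ × ℤ => p.1 = 0)
    have e1 : ((T.filter fun p : ℤ × ℤ => ¬ (p.1 ≠ 0 ∧ p.2 ≠ 0)).filter
          fun p : ℤ × ℤ => p.1 = 0).card = (P.filter fun i => w i < 0).card := by
      apply Finset.card_nbij' (fun p => p.2) (fun a => (0, a))
      · rintro ⟨i, j⟩ hp
        simp only [Finset.mem_coe, hTdef, Finset.mem_filter, Finset.mem_product] at hp ⊢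
        obtain ⟨⟨⟨⟨h1, h2⟩, h3, h4⟩, h5⟩, h6⟩ := hp
        subst h6
        have hWp : ∀ k ∈ W, 0 < k → k ∈ P := by
          intro k hk h0
          rcases (hW k).1 hk with h | h | h
          · omega
          · exact h
          · exact absurd (hP _ h) (by omega)
        exact ⟨hWp _ h2 (by omega), by omega⟩
      · intro a ha
        simp only [Finset.mem_coe, Finset.mem_filter] at ha
        obtain ⟨h1, h2⟩ := ha
        have := hP _ h1
        simp only [Finset.mem_coe, hTdef, Finset.mem_filter, Finset.mem_product]
        refine ⟨⟨⟨⟨hW0, (hW a).2 (Or.inr (Or.inl h1))⟩, by omega, by omega⟩, by omega⟩, trivial⟩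
      · rintro ⟨i, j⟩ hp
        simp only [Finset.mem_coe, hTdef, Finset.mem_filter, Finset.mem_product] at hp
        obtain ⟨⟨⟨⟨h1, h2⟩, h3, h4⟩, h5⟩, h6⟩ := hp
        simp [h6.symm]
      · intro a _; rfl
    have e2 : ((T.filter fun p : ℤ × ℤ => ¬ (p.1 ≠ 0 ∧ p.2 ≠ 0)).filter
          fun p : ℤ × ℤ => ¬ p.1 = 0).card = (P.filter fun i => w i < 0).card := by
      apply Finset.card_nbij' (fun p => -p.1) (fun a => (-a, 0))
      · rintro ⟨i, j⟩ hp
        simp only [Finset.mem_coe, hTdef, Finset.mem_filter, Finset.mem_product] at hp ⊢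
        obtain ⟨⟨⟨⟨h1, h2⟩, h3, h4⟩, h5⟩, h6⟩ := hp
        have hj : j = 0 := by tauto
        subst hj
        have e := hodd i
        have hWn : ∀ k ∈ W, k < 0 → -k ∈ P := by
          intro k hk h0
          rcases (hW k).1 hk with h | h | h
          · omega
          · exact absurd (hP _ h) (by omega)
          · exact h
        exact ⟨hWn _ h1 (by omega), by omega⟩
      · intro a ha
        simp only [Finset.mem_coe, Finset.mem_filter] at ha
        obtain ⟨h1, h2⟩ := ha
        have := hP _ h1
        have e := hodd a
        simp only [Finset.mem_coe, hTdef, Finset.mem_filter, Finset.mem_product]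
        refine ⟨⟨⟨⟨(hW (-a)).2 (Or.inr (Or.inr (by rwa [neg_neg]))), hW0⟩, by omega, by omega⟩,
          by omega⟩, by omega⟩
      · rintro ⟨i, j⟩ hp
        simp only [Finset.mem_coe, hTdef, Finset.mem_filter, Finset.mem_product] at hp
        obtain ⟨⟨⟨⟨h1, h2⟩, h3, h4⟩, h5⟩, h6⟩ := hp
        have hj : j = 0 := by tauto
        simp [hj]
      · intro a _; simp
    omega
  have c0 := Finset.card_filter_add_card_filter_not (s := T)
    (p := fun p : ℤ × ℤ => p.1 ≠ 0 ∧ p.2 ≠ 0)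
  rw [keyA] at c0
  omega
lemma flatten_aux (u v ru rv : ℤ) (hu : u ≠ 0) (hv : v ≠ 0)
    (hru : 1 ≤ ru) (hrv : 1 ≤ rv)
    (h1 : |u| < |v| → ru < rv) (h2 : |v| < |u| → rv < ru)
    (h3 : |u| = |v| → ru = rv) :
    (((if u < 0 then -1 else 1) * ru < (if v < 0 then -1 else 1) * rv) ↔ u < v)
    ∧ (((if u < 0 then -1 else 1) * ru + (if v < 0 then -1 else 1) * rv < 0) ↔ u + v < 0) := by
  rcases hu.lt_or_gt with hu' | hu' <;> rcases hv.lt_or_gt with hv' | hv'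
  · rw [abs_of_neg hu', abs_of_neg hv'] at h1 h2 h3
    rw [if_pos hu', if_pos hv']
    omega
  · rw [abs_of_neg hu', abs_of_pos hv'] at h1 h2 h3
    rw [if_pos hu', if_neg (by omega)]
    omega
  · rw [abs_of_pos hu', abs_of_neg hv'] at h1 h2 h3
    rw [if_neg (by omega), if_pos hv']
    omega
  · rw [abs_of_pos hu', abs_of_pos hv'] at h1 h2 h3
    rw [if_neg (by omega), if_neg (by omega)]
    omega

section parts
variable (n : ℕ) (w : ℤ → ℤ)

lemma w_zero (hw : IsSigned n w) : w 0 = 0 := by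
  have := hw.1 0; simp at this; omega

lemma w_ne_zero (hw : IsSigned n w) {x : ℤ} (h1 : 1 ≤ x) (h2 : x ≤ (n : ℤ)) : w x ≠ 0 := by
  intro h0
  have hx : x ∈ Set.Icc (-(n : ℤ)) n := by constructor <;> omega
  have h0' : (0 : ℤ) ∈ Set.Icc (-(n : ℤ)) n := by constructor <;> omega
  have := hw.2.injOn hx h0' (by rw [h0, w_zero n w hw])
  omega

lemma oddRank_le {a b : ℤ} (h : |w (2 * a - 1)| ≤ |w (2 * b - 1)|) :
    oddRank n w a ≤ oddRank n w b := by
  apply Finset.card_le_card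
  intro c hc
  simp only [Finset.mem_filter] at hc ⊢
  exact ⟨hc.1, le_trans hc.2 h⟩

lemma oddRank_lt {a b : ℤ} (hb : 1 ≤ b ∧ b ≤ (((n + 1) / 2 : ℕ) : ℤ))
    (h : |w (2 * a - 1)| < |w (2 * b - 1)|) : oddRank n w a < oddRank n w b := by
  apply Finset.card_lt_card
  rw [Finset.ssubset_iff_of_subset]
  · refine ⟨b, ?_, ?_⟩
    · simp only [Finset.mem_filter, Finset.mem_Icc]
      exact ⟨hb, le_refl _⟩
    · simp only [Finset.mem_filter, Finset.mem_Icc]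
      rintro ⟨-, hle⟩
      omega
  · intro c hc
    simp only [Finset.mem_filter] at hc ⊢
    exact ⟨hc.1, le_trans hc.2 h.le⟩

lemma oddRank_pos {a : ℤ} (ha : 1 ≤ a ∧ a ≤ (((n + 1) / 2 : ℕ) : ℤ)) :
    1 ≤ oddRank n w a := by
  rw [Nat.one_le_iff_ne_zero, ← Nat.pos_iff_ne_zero]
  unfold oddRank
  rw [Finset.card_pos]
  exact ⟨a, by simp only [Finset.mem_filter, Finset.mem_Icc]; exact ⟨ha, le_refl _⟩⟩

lemma oddPart_facts (hw : IsSigned n w) {a b : ℤ}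
    (ha : 1 ≤ a ∧ a ≤ (((n + 1) / 2 : ℕ) : ℤ)) (hb : 1 ≤ b ∧ b ≤ (((n + 1) / 2 : ℕ) : ℤ)) :
    (oddPart n w a < oddPart n w b ↔ w (2 * a - 1) < w (2 * b - 1))
    ∧ (oddPart n w a + oddPart n w b < 0 ↔ w (2 * a - 1) + w (2 * b - 1) < 0) := by
  have hu : w (2 * a - 1) ≠ 0 := w_ne_zero n w hw (by omega) (by omega)
  have hv : w (2 * b - 1) ≠ 0 := w_ne_zero n w hw (by omega) (by omega)
  have hru : (1 : ℤ) ≤ (oddRank n w a : ℤ) := by exact_mod_cast oddRank_pos n w ha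
  have hrv : (1 : ℤ) ≤ (oddRank n w b : ℤ) := by exact_mod_cast oddRank_pos n w hb
  exact flatten_aux _ _ _ _ hu hv hru hrv
    (fun h => by exact_mod_cast oddRank_lt n w hb h)
    (fun h => by exact_mod_cast oddRank_lt n w ha h)
    (fun h => by exact_mod_cast le_antisymm (oddRank_le n w h.le) (oddRank_le n w h.ge))

lemma oddPart_neg (ha : 1 ≤ a ∧ a ≤ (((n + 1) / 2 : ℕ) : ℤ)) :
    (oddPart n w a < 0 ↔ w (2 * a - 1) < 0) := by
  have hru : (1 : ℤ) ≤ (oddRank n w a : ℤ) := by exact_mod_cast oddRank_pos n w ha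
  unfold oddPart
  split_ifs with h <;> omega

lemma evenRank_le {a b : ℤ} (h : |w (2 * a)| ≤ |w (2 * b)|) :
    evenRank n w a ≤ evenRank n w b := by
  apply Finset.card_le_card
  intro c hc
  simp only [Finset.mem_filter] at hc ⊢
  exact ⟨hc.1, le_trans hc.2 h⟩

lemma evenRank_lt {a b : ℤ} (hb : 1 ≤ b ∧ b ≤ ((n / 2 : ℕ) : ℤ))
    (h : |w (2 * a)| < |w (2 * b)|) : evenRank n w a < evenRank n w b := by
  apply Finset.card_lt_card
  rw [Finset.ssubset_iff_of_subset]
  · refine ⟨b, ?_, ?_⟩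
    · simp only [Finset.mem_filter, Finset.mem_Icc]
      exact ⟨hb, le_refl _⟩
    · simp only [Finset.mem_filter, Finset.mem_Icc]
      rintro ⟨-, hle⟩
      omega
  · intro c hc
    simp only [Finset.mem_filter] at hc ⊢
    exact ⟨hc.1, le_trans hc.2 h.le⟩

lemma evenRank_pos {a : ℤ} (ha : 1 ≤ a ∧ a ≤ ((n / 2 : ℕ) : ℤ)) :
    1 ≤ evenRank n w a := by
  rw [Nat.one_le_iff_ne_zero, ← Nat.pos_iff_ne_zero]
  unfold evenRank
  rw [Finset.card_pos]
  exact ⟨a, by simp only [Finset.mem_filter, Finset.mem_Icc]; exact ⟨ha, le_refl _⟩⟩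

lemma evenPart_facts (hw : IsSigned n w) {a b : ℤ}
    (ha : 1 ≤ a ∧ a ≤ ((n / 2 : ℕ) : ℤ)) (hb : 1 ≤ b ∧ b ≤ ((n / 2 : ℕ) : ℤ)) :
    (evenPart n w a < evenPart n w b ↔ w (2 * a) < w (2 * b))
    ∧ (evenPart n w a + evenPart n w b < 0 ↔ w (2 * a) + w (2 * b) < 0) := by
  have hu : w (2 * a) ≠ 0 := w_ne_zero n w hw (by omega) (by omega)
  have hv : w (2 * b) ≠ 0 := w_ne_zero n w hw (by omega) (by omega)
  have hru : (1 : ℤ) ≤ (evenRank n w a : ℤ) := by exact_mod_cast evenRank_pos n w ha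
  have hrv : (1 : ℤ) ≤ (evenRank n w b : ℤ) := by exact_mod_cast evenRank_pos n w hb
  exact flatten_aux _ _ _ _ hu hv hru hrv
    (fun h => by exact_mod_cast evenRank_lt n w hb h)
    (fun h => by exact_mod_cast evenRank_lt n w ha h)
    (fun h => by exact_mod_cast le_antisymm (evenRank_le n w h.le) (evenRank_le n w h.ge))

lemma evenPart_neg (ha : 1 ≤ a ∧ a ≤ ((n / 2 : ℕ) : ℤ)) :
    (evenPart n w a < 0 ↔ w (2 * a) < 0) := by
  have hru : (1 : ℤ) ≤ (evenRank n w a : ℤ) := by exact_mod_cast evenRank_pos n w ha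
  unfold evenPart
  split_ifs with h <;> omega

end parts
section translate
variable (n : ℕ) (w : ℤ → ℤ)

lemma invStat_odd (hw : IsSigned n w) :
    invStat ((n + 1) / 2) (oddPart n w)
      = invC w ((Finset.Icc (1 : ℤ) (n : ℤ)).filter fun i => i % 2 = 1) := by
  unfold invStat invC
  apply Finset.card_nbij' (fun p : ℤ × ℤ => (2 * p.1 - 1, 2 * p.2 - 1))
    (fun q : ℤ × ℤ => ((q.1 + 1) / 2, (q.2 + 1) / 2))
  · rintro ⟨a, b⟩ hp
    simp only [Finset.mem_coe, Finset.mem_filter, Finset.mem_product, Finset.mem_Icc] at hp ⊢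
    obtain ⟨⟨ha, hb⟩, hlt, hinv⟩ := hp
    exact ⟨⟨⟨⟨by omega, by omega⟩, by omega⟩, ⟨⟨by omega, by omega⟩, by omega⟩⟩, by omega,
      (oddPart_facts n w hw hb ha).1.mp hinv⟩
  · rintro ⟨i, j⟩ hq
    simp only [Finset.mem_coe, Finset.mem_filter, Finset.mem_product, Finset.mem_Icc] at hq ⊢
    obtain ⟨⟨⟨⟨hi1, hi2⟩, hip⟩, ⟨⟨hj1, hj2⟩, hjp⟩⟩, hlt, hinv⟩ := hq
    refine ⟨⟨⟨by omega, by omega⟩, by omega, by omega⟩, by omega, ?_⟩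
    apply (oddPart_facts n w hw (a := (j + 1) / 2) (b := (i + 1) / 2)
      (by omega) (by omega)).1.mpr
    have e1 : 2 * ((i + 1) / 2) - 1 = i := by omega
    have e2 : 2 * ((j + 1) / 2) - 1 = j := by omega
    rw [e1, e2]
    exact hinv
  · rintro ⟨a, b⟩ _
    simp only [Prod.mk.injEq]
    constructor <;> omega
  · rintro ⟨i, j⟩ hq
    simp only [Finset.mem_coe, Finset.mem_filter, Finset.mem_product, Finset.mem_Icc] at hq
    simp only [Prod.mk.injEq]
    constructor <;> omega

lemma nspStat_odd (hw : IsSigned n w) :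
    nspStat ((n + 1) / 2) (oddPart n w)
      = nspC w ((Finset.Icc (1 : ℤ) (n : ℤ)).filter fun i => i % 2 = 1) := by
  unfold nspStat nspC
  apply Finset.card_nbij' (fun p : ℤ × ℤ => (2 * p.1 - 1, 2 * p.2 - 1))
    (fun q : ℤ × ℤ => ((q.1 + 1) / 2, (q.2 + 1) / 2))
  · rintro ⟨a, b⟩ hp
    simp only [Finset.mem_coe, Finset.mem_filter, Finset.mem_product, Finset.mem_Icc] at hp ⊢
    obtain ⟨⟨ha, hb⟩, hlt, hs⟩ := hp
    exact ⟨⟨⟨⟨by omega, by omega⟩, by omega⟩, ⟨⟨by omega, by omega⟩, by omega⟩⟩, by omega,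
      (oddPart_facts n w hw ha hb).2.mp hs⟩
  · rintro ⟨i, j⟩ hq
    simp only [Finset.mem_coe, Finset.mem_filter, Finset.mem_product, Finset.mem_Icc] at hq ⊢
    obtain ⟨⟨⟨⟨hi1, hi2⟩, hip⟩, ⟨⟨hj1, hj2⟩, hjp⟩⟩, hlt, hs⟩ := hq
    refine ⟨⟨⟨by omega, by omega⟩, by omega, by omega⟩, by omega, ?_⟩
    apply (oddPart_facts n w hw (a := (i + 1) / 2) (b := (j + 1) / 2)
      (by omega) (by omega)).2.mpr
    have e1 : 2 * ((i + 1) / 2) - 1 = i := by omega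
    have e2 : 2 * ((j + 1) / 2) - 1 = j := by omega
    rw [e1, e2]
    exact hs
  · rintro ⟨a, b⟩ _
    simp only [Prod.mk.injEq]
    constructor <;> omega
  · rintro ⟨i, j⟩ hq
    simp only [Finset.mem_coe, Finset.mem_filter, Finset.mem_product, Finset.mem_Icc] at hq
    simp only [Prod.mk.injEq]
    constructor <;> omega

lemma negStat_odd (hw : IsSigned n w) :
    negStat ((n + 1) / 2) (oddPart n w)
      = negC w ((Finset.Icc (1 : ℤ) (n : ℤ)).filter fun i => i % 2 = 1) := by
  unfold negStat negC
  apply Finset.card_nbij' (fun a : ℤ => 2 * a - 1) (fun i : ℤ => (i + 1) / 2)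
  · intro a ha
    simp only [Finset.mem_coe, Finset.mem_filter, Finset.mem_Icc] at ha ⊢
    obtain ⟨ha1, hn⟩ := ha
    exact ⟨⟨⟨by omega, by omega⟩, by omega⟩, (oddPart_neg n w ha1).mp hn⟩
  · intro i hi
    simp only [Finset.mem_coe, Finset.mem_filter, Finset.mem_Icc] at hi ⊢
    obtain ⟨⟨⟨hi1, hi2⟩, hip⟩, hn⟩ := hi
    refine ⟨⟨by omega, by omega⟩, ?_⟩
    apply (oddPart_neg n w (a := (i + 1) / 2) (by omega)).mpr
    have e1 : 2 * ((i + 1) / 2) - 1 = i := by omega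
    rw [e1]
    exact hn
  · intro a _; beta_reduce; omega
  · intro i hi
    simp only [Finset.mem_coe, Finset.mem_filter, Finset.mem_Icc] at hi
    beta_reduce; omega

lemma invStat_even (hw : IsSigned n w) :
    invStat (n / 2) (evenPart n w)
      = invC w ((Finset.Icc (1 : ℤ) (n : ℤ)).filter fun i => i % 2 = 0) := by
  unfold invStat invC
  apply Finset.card_nbij' (fun p : ℤ × ℤ => (2 * p.1, 2 * p.2))
    (fun q : ℤ × ℤ => (q.1 / 2, q.2 / 2))
  · rintro ⟨a, b⟩ hp
    simp only [Finset.mem_coe, Finset.mem_filter, Finset.mem_product, Finset.mem_Icc] at hp ⊢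
    obtain ⟨⟨ha, hb⟩, hlt, hinv⟩ := hp
    exact ⟨⟨⟨⟨by omega, by omega⟩, by omega⟩, ⟨⟨by omega, by omega⟩, by omega⟩⟩, by omega,
      (evenPart_facts n w hw hb ha).1.mp hinv⟩
  · rintro ⟨i, j⟩ hq
    simp only [Finset.mem_coe, Finset.mem_filter, Finset.mem_product, Finset.mem_Icc] at hq ⊢
    obtain ⟨⟨⟨⟨hi1, hi2⟩, hip⟩, ⟨⟨hj1, hj2⟩, hjp⟩⟩, hlt, hinv⟩ := hq
    refine ⟨⟨⟨by omega, by omega⟩, by omega, by omega⟩, by omega, ?_⟩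
    apply (evenPart_facts n w hw (a := j / 2) (b := i / 2) (by omega) (by omega)).1.mpr
    have e1 : 2 * (i / 2) = i := by omega
    have e2 : 2 * (j / 2) = j := by omega
    rw [e1, e2]
    exact hinv
  · rintro ⟨a, b⟩ _
    simp only [Prod.mk.injEq]
    constructor <;> omega
  · rintro ⟨i, j⟩ hq
    simp only [Finset.mem_coe, Finset.mem_filter, Finset.mem_product, Finset.mem_Icc] at hq
    simp only [Prod.mk.injEq]
    constructor <;> omega

lemma nspStat_even (hw : IsSigned n w) :
    nspStat (n / 2) (evenPart n w)
      = nspC w ((Finset.Icc (1 : ℤ) (n : ℤ)).filter fun i => i % 2 = 0) := by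
  unfold nspStat nspC
  apply Finset.card_nbij' (fun p : ℤ × ℤ => (2 * p.1, 2 * p.2))
    (fun q : ℤ × ℤ => (q.1 / 2, q.2 / 2))
  · rintro ⟨a, b⟩ hp
    simp only [Finset.mem_coe, Finset.mem_filter, Finset.mem_product, Finset.mem_Icc] at hp ⊢
    obtain ⟨⟨ha, hb⟩, hlt, hs⟩ := hp
    exact ⟨⟨⟨⟨by omega, by omega⟩, by omega⟩, ⟨⟨by omega, by omega⟩, by omega⟩⟩, by omega,
      (evenPart_facts n w hw ha hb).2.mp hs⟩
  · rintro ⟨i, j⟩ hq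
    simp only [Finset.mem_coe, Finset.mem_filter, Finset.mem_product, Finset.mem_Icc] at hq ⊢
    obtain ⟨⟨⟨⟨hi1, hi2⟩, hip⟩, ⟨⟨hj1, hj2⟩, hjp⟩⟩, hlt, hs⟩ := hq
    refine ⟨⟨⟨by omega, by omega⟩, by omega, by omega⟩, by omega, ?_⟩
    apply (evenPart_facts n w hw (a := i / 2) (b := j / 2) (by omega) (by omega)).2.mpr
    have e1 : 2 * (i / 2) = i := by omega
    have e2 : 2 * (j / 2) = j := by omega
    rw [e1, e2]
    exact hs
  · rintro ⟨a, b⟩ _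
    simp only [Prod.mk.injEq]
    constructor <;> omega
  · rintro ⟨i, j⟩ hq
    simp only [Finset.mem_coe, Finset.mem_filter, Finset.mem_product, Finset.mem_Icc] at hq
    simp only [Prod.mk.injEq]
    constructor <;> omega

lemma negStat_even (hw : IsSigned n w) :
    negStat (n / 2) (evenPart n w)
      = negC w ((Finset.Icc (1 : ℤ) (n : ℤ)).filter fun i => i % 2 = 0) := by
  unfold negStat negC
  apply Finset.card_nbij' (fun a : ℤ => 2 * a) (fun i : ℤ => i / 2)
  · intro a ha
    simp only [Finset.mem_coe, Finset.mem_filter, Finset.mem_Icc] at ha ⊢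
    obtain ⟨ha1, hn⟩ := ha
    exact ⟨⟨⟨by omega, by omega⟩, by omega⟩, (evenPart_neg n w ha1).mp hn⟩
  · intro i hi
    simp only [Finset.mem_coe, Finset.mem_filter, Finset.mem_Icc] at hi ⊢
    obtain ⟨⟨⟨hi1, hi2⟩, hip⟩, hn⟩ := hi
    refine ⟨⟨by omega, by omega⟩, ?_⟩
    apply (evenPart_neg n w (a := i / 2) (by omega)).mpr
    have e1 : 2 * (i / 2) = i := by omega
    rw [e1]
    exact hn
  · intro a _; beta_reduce; omega
  · intro i hi
    simp only [Finset.mem_coe, Finset.mem_filter, Finset.mem_Icc] at hi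
    beta_reduce; omega

lemma negStat_parity_split :
    negStat n w
      = negC w ((Finset.Icc (1 : ℤ) (n : ℤ)).filter fun i => i % 2 = 1)
        + negC w ((Finset.Icc (1 : ℤ) (n : ℤ)).filter fun i => i % 2 = 0) := by
  unfold negStat negC
  have c := Finset.card_filter_add_card_filter_not
    (s := (Finset.Icc (1 : ℤ) (n : ℤ)).filter fun i => w i < 0) (p := fun i : ℤ => i % 2 = 1)
  have e1 : (((Finset.Icc (1 : ℤ) (n : ℤ)).filter fun i => w i < 0).filter fun i => i % 2 = 1)
      = ((Finset.Icc (1 : ℤ) (n : ℤ)).filter fun i => i % 2 = 1).filter fun i => w i < 0 := by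
    ext i
    simp only [Finset.mem_filter, Finset.mem_Icc]
    tauto
  have e2 : (((Finset.Icc (1 : ℤ) (n : ℤ)).filter fun i => w i < 0).filter fun i => ¬ i % 2 = 1)
      = ((Finset.Icc (1 : ℤ) (n : ℤ)).filter fun i => i % 2 = 0).filter fun i => w i < 0 := by
    ext i
    simp only [Finset.mem_filter, Finset.mem_Icc]
    constructor
    · rintro ⟨⟨h1, h2⟩, h3⟩
      exact ⟨⟨h1, by omega⟩, h2⟩
    · rintro ⟨⟨h1, h2⟩, h3⟩
      exact ⟨⟨h1, h3⟩, by omega⟩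
  rw [e1, e2] at c
  omega

lemma parity_split :
    invC w (Finset.Icc (-(n : ℤ)) (n : ℤ))
      = (Lset n w).card
        + invC w ((Finset.Icc (-(n : ℤ)) (n : ℤ)).filter fun i => i % 2 = 1)
        + invC w ((Finset.Icc (-(n : ℤ)) (n : ℤ)).filter fun i => i % 2 = 0) := by
  unfold invC
  set I := Finset.Icc (-(n : ℤ)) (n : ℤ) with hIdef
  set T := (I ×ˢ I).filter fun p : ℤ × ℤ => p.1 < p.2 ∧ w p.2 < w p.1 with hTdef
  have c1 := Finset.card_filter_add_card_filter_not (s := T)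
    (p := fun p : ℤ × ℤ => p.1 % 2 = p.2 % 2)
  have c2 := Finset.card_filter_add_card_filter_not
    (s := T.filter fun p : ℤ × ℤ => p.1 % 2 = p.2 % 2) (p := fun p : ℤ × ℤ => p.1 % 2 = 1)
  have e0 : T.filter (fun p : ℤ × ℤ => ¬ p.1 % 2 = p.2 % 2) = Lset n w := by
    ext ⟨i, j⟩
    simp only [hTdef, hIdef, Lset, Finset.mem_filter, Finset.mem_product]
    tauto
  have e1 : (T.filter fun p : ℤ × ℤ => p.1 % 2 = p.2 % 2).filter (fun p : ℤ × ℤ => p.1 % 2 = 1)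
      = ((I.filter fun i => i % 2 = 1) ×ˢ (I.filter fun i => i % 2 = 1)).filter
          fun p : ℤ × ℤ => p.1 < p.2 ∧ w p.2 < w p.1 := by
    ext ⟨i, j⟩
    simp only [hTdef, Finset.mem_filter, Finset.mem_product]
    constructor
    · rintro ⟨⟨⟨⟨h1, h2⟩, h3, h4⟩, h5⟩, h6⟩
      exact ⟨⟨⟨h1, by omega⟩, h2, by omega⟩, h3, h4⟩
    · rintro ⟨⟨⟨h1, h1'⟩, h2, h2'⟩, h3, h4⟩
      exact ⟨⟨⟨⟨h1, h2⟩, h3, h4⟩, by omega⟩, by omega⟩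
  have e2 : (T.filter fun p : ℤ × ℤ => p.1 % 2 = p.2 % 2).filter (fun p : ℤ × ℤ => ¬ p.1 % 2 = 1)
      = ((I.filter fun i => i % 2 = 0) ×ˢ (I.filter fun i => i % 2 = 0)).filter
          fun p : ℤ × ℤ => p.1 < p.2 ∧ w p.2 < w p.1 := by
    ext ⟨i, j⟩
    simp only [hTdef, Finset.mem_filter, Finset.mem_product]
    constructor
    · rintro ⟨⟨⟨⟨h1, h2⟩, h3, h4⟩, h5⟩, h6⟩
      exact ⟨⟨⟨h1, by omega⟩, h2, by omega⟩, h3, h4⟩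
    · rintro ⟨⟨⟨h1, h1'⟩, h2, h2'⟩, h3, h4⟩
      exact ⟨⟨⟨⟨h1, h2⟩, h3, h4⟩, by omega⟩, by omega⟩
  rw [e0] at c1
  rw [e1, e2] at c2
  omega

end translate

/-- `L(w) = neg(w₁) + l(w) − l(w₁) − l(w₂)`. -/
theorem L_eq_neg_add_len_sub (n : ℕ) (w : ℤ → ℤ) (hw : IsSigned n w) :
    (Lstat n w : ℤ) =
      (negStat ((n + 1) / 2) (oddPart n w) : ℤ) + (lenStat n w : ℤ)
        - (lenStat ((n + 1) / 2) (oddPart n w) : ℤ)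
        - (lenStat (n / 2) (evenPart n w) : ℤ) := by
  have hodd := hw.1
  have hO := invC_sym w hodd ((Finset.Icc (1 : ℤ) (n : ℤ)).filter fun i => i % 2 = 1)
    ((Finset.Icc (-(n : ℤ)) (n : ℤ)).filter fun i => i % 2 = 1)
    (by intro i hi; simp only [Finset.mem_coe, Finset.mem_filter, Finset.mem_Icc] at hi; omega)
    (by intro i; simp only [Finset.mem_filter, Finset.mem_Icc]; omega)
  have hE := invC_sym0 w hodd ((Finset.Icc (1 : ℤ) (n : ℤ)).filter fun i => i % 2 = 0)
    ((Finset.Icc (-(n : ℤ)) (n : ℤ)).filter fun i => i % 2 = 0)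
    (by intro i hi; simp only [Finset.mem_coe, Finset.mem_filter, Finset.mem_Icc] at hi; omega)
    (by intro i; simp only [Finset.mem_filter, Finset.mem_Icc]; omega)
  have hF := invC_sym0 w hodd (Finset.Icc (1 : ℤ) (n : ℤ)) (Finset.Icc (-(n : ℤ)) (n : ℤ))
    (by intro i hi; simp only [Finset.mem_Icc] at hi; omega)
    (by intro i; simp only [Finset.mem_Icc]; omega)
  have hpar := parity_split n w
  have hneg := negStat_parity_split n w
  have h1 := invStat_odd n w hw
  have h2 := nspStat_odd n w hw
  have h3 := negStat_odd n w hw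
  have h4 := invStat_even n w hw
  have h5 := nspStat_even n w hw
  have h6 := negStat_even n w hw
  have d1 : invC w (Finset.Icc (1 : ℤ) (n : ℤ)) = invStat n w := rfl
  have d2 : nspC w (Finset.Icc (1 : ℤ) (n : ℤ)) = nspStat n w := rfl
  have d3 : negC w (Finset.Icc (1 : ℤ) (n : ℤ)) = negStat n w := rfl
  have dL : Lstat n w = (Lset n w).card / 2 := rfl
  unfold lenStat
  omega
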